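/- For every real α > 0 with α ≠ 1 and every real X ≥ 1, the error in the Euler–Maclaurin approximation satisfies the lower bound: ζ(α) − 1/((α−1)X^{α−1}) − ∑_{n ≤ X} 1/n^α ≥ −1/X^α. -/

import Mathlib

open Real Set MeasureTheory Filter Topology
open ZetaAsymptotics

namespace EMaux

lemma term_of_ne {n : ℕ} (hn : 0 < n) {s : ℝ} (hs : 0 < s) (hs1 : s ≠ 1) :
    term n s = 1 / (s - 1) * (1 / (n : ℝ) ^ (s - 1) - 1 / ((n : ℝ) + 1) ^ (s - 1))
    - (n : ℝ) / s * (1 / (n : ℝ) ^ s - 1 / ((n : ℝ) + 1) ^ s) := by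
  have hv : ∀ x ∈ uIcc (n : ℝ) (n + 1), 0 < x := by
    intro x hx
    rw [uIcc_of_le (by simp only [le_add_iff_nonneg_right, zero_le_one])] at hx
    exact (Nat.cast_pos.mpr hn).trans_le hx.1
  have hns : -s ≠ -1 := fun h => hs1 (neg_injective h)
  have hns1 : -(s + 1) ≠ -1 := fun h => hs.ne' (by linarith [neg_injective h])
  calc term n s
    _ = ∫ x : ℝ in n..(n + 1), (x - n) / x ^ (s + 1) := by rfl
    _ = ∫ x : ℝ in n..(n + 1), (x ^ (-s) - n * x ^ (-(s + 1))) := by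
      refine intervalIntegral.integral_congr (fun x hx ↦ ?_)
      rw [sub_div, rpow_add_one (hv x hx).ne', mul_comm, ← div_div, div_self (hv x hx).ne',
        rpow_neg (hv x hx).le, rpow_neg (hv x hx).le, one_div, rpow_add_one (hv x hx).ne', mul_comm,
        div_eq_mul_inv]
    _ = (∫ x : ℝ in n..(n + 1), x ^ (-s)) - n * (∫ x : ℝ in n..(n + 1), x ^ (-(s + 1))) := by
      rw [intervalIntegral.integral_sub, intervalIntegral.integral_const_mul] <;>
      [skip; apply IntervalIntegrable.const_mul] <;>
      · refine intervalIntegral.intervalIntegrable_rpow (Or.inr <| notMem_uIcc_of_lt ?_ ?_)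
        · exact_mod_cast hn
        · positivity
    _ = 1 / (s - 1) * (1 / n ^ (s - 1) - 1 / (n + 1) ^ (s - 1))
          - n / s * (1 / n ^ s - 1 / (n + 1) ^ s) := by
      have : 0 ∉ uIcc (n : ℝ) (n + 1) := (lt_irrefl _ <| hv _ ·)
      rw [integral_rpow (Or.inr ⟨hns, this⟩), integral_rpow (Or.inr ⟨hns1, this⟩)]
      congr 1
      · rw [show -s + 1 = -(s - 1) by ring, div_neg, ← neg_div, mul_comm, mul_one_div, neg_sub,
          rpow_neg (Nat.cast_nonneg _), one_div, rpow_neg (by positivity), one_div]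
      · rw [show -(s + 1) + 1 = -s by ring, div_neg, ← neg_div, neg_sub, div_mul_eq_mul_div,
          mul_div_assoc, rpow_neg (Nat.cast_nonneg _), one_div, rpow_neg (by positivity), one_div]

lemma term_sum_of_ne (N : ℕ) {s : ℝ} (hs : 0 < s) (hs1 : s ≠ 1) :
    term_sum s N = 1 / (s - 1) * (1 - 1 / (N + 1 : ℝ) ^ (s - 1))
    - 1 / s * ((∑ n ∈ Finset.range N, 1 / (n + 1 : ℝ) ^ s) - N / (N + 1 : ℝ) ^ s) := by
  simp only [term_sum, termSum]
  conv => enter [1, 2, n]; rw [term_of_ne (by simp) hs hs1]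
  rw [Finset.sum_sub_distrib]
  congr 1
  · induction' N with N hN
    · simp
    · rw [Finset.sum_range_succ, hN, Nat.cast_add_one]
      ring_nf
  · simp_rw [mul_comm (_ / _), ← mul_div_assoc, div_eq_mul_inv _ s, ← Finset.sum_mul, mul_one]
    congr 1
    induction' N with N hN
    · simp
    · simp_rw [Finset.sum_range_succ, hN, Nat.cast_add_one, sub_eq_add_neg, add_assoc]
      congr 1
      ring_nf

lemma term_le {m : ℕ} (hm : 0 < m) {s : ℝ} (hs : 0 < s) :
    term m s ≤ ((m : ℝ) ^ (-s) - ((m : ℝ) + 1) ^ (-s)) / s := by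
  have hm' : (0 : ℝ) < m := by exact_mod_cast hm
  have h0 : (0 : ℝ) ∉ uIcc (m : ℝ) ((m : ℝ) + 1) := notMem_uIcc_of_lt hm' (by linarith)
  have hns1 : -(s + 1) ≠ -1 := fun h => hs.ne' (by linarith [neg_injective h])
  have key : term m s ≤ ∫ x in (m : ℝ)..((m : ℝ) + 1), x ^ (-(s + 1)) := by
    rw [ZetaAsymptotics.term]
    apply intervalIntegral.integral_mono_on (by linarith)
      (ZetaAsymptotics.term_welldef hm hs)
      (intervalIntegral.intervalIntegrable_rpow (Or.inr h0))
    intro x hx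
    have hx0 : (0 : ℝ) < x := lt_of_lt_of_le hm' hx.1
    have hxp : (0 : ℝ) < x ^ (s + 1) := rpow_pos_of_pos hx0 _
    rw [rpow_neg hx0.le, ← one_div]
    exact div_le_div_of_nonneg_right (by linarith [hx.2]) hxp.le
  refine key.trans (le_of_eq ?_)
  rw [integral_rpow (Or.inr ⟨hns1, h0⟩)]
  rw [show -(s + 1) + 1 = -s by ring, div_neg, ← neg_div, neg_sub]

lemma hasSum_tel {s : ℝ} (hs : 0 < s) {M : ℝ} (hM : 0 < M) :
    HasSum (fun n : ℕ ↦ ((M + n) ^ (-s) - (M + n + 1) ^ (-s)) / s) (M ^ (-s) / s) := by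
  have hnn : ∀ n : ℕ, 0 ≤ ((M + n) ^ (-s) - (M + n + 1) ^ (-s)) / s := by
    intro n
    have h1 : (M + n + 1 : ℝ) ^ (-s) ≤ (M + n) ^ (-s) :=
      rpow_le_rpow_of_nonpos (by positivity) (by linarith) (by linarith)
    exact div_nonneg (by linarith) hs.le
  rw [hasSum_iff_tendsto_nat_of_nonneg hnn]
  have heq : ∀ K : ℕ, ∑ n ∈ Finset.range K, ((M + n) ^ (-s) - (M + n + 1) ^ (-s)) / s
      = (M ^ (-s) - (M + K) ^ (-s)) / s := by
    intro K
    rw [← Finset.sum_div]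
    congr 1
    have h := Finset.sum_range_sub' (fun n : ℕ ↦ (M + n) ^ (-s)) K
    simp only [Nat.cast_zero, add_zero] at h
    rw [← h]
    apply Finset.sum_congr rfl
    intro n _
    push_cast
    ring_nf
  simp_rw [heq]
  have htend : Tendsto (fun K : ℕ ↦ (M + K : ℝ) ^ (-s)) atTop (𝓝 0) := by
    apply (tendsto_rpow_neg_atTop hs).comp
    exact tendsto_atTop_add_const_left _ _ tendsto_natCast_atTop_atTop
  have : Tendsto (fun K : ℕ ↦ (M ^ (-s) - (M + K : ℝ) ^ (-s)) / s) atTop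
      (𝓝 ((M ^ (-s) - 0) / s)) := (tendsto_const_nhds.sub htend).div_const s
  simpa using this

lemma summable_tail {s : ℝ} (hs : 0 < s) (N : ℕ) :
    Summable (fun n : ℕ ↦ term (N + 1 + n) s) := by
  apply Summable.of_nonneg_of_le (fun n ↦ term_nonneg _ _) (fun n ↦ ?_)
    (hasSum_tel hs (show (0:ℝ) < (N:ℝ) + 1 by positivity)).summable
  have := term_le (m := N + 1 + n) (by omega) hs
  refine this.trans (le_of_eq ?_)
  push_cast
  ring_nf

lemma tail_le {s : ℝ} (hs : 0 < s) (N : ℕ) :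
    s * (∑' n : ℕ, term (N + 1 + n) s) ≤ 1 / ((N : ℝ) + 1) ^ s := by
  have h1 : (∑' n : ℕ, term (N + 1 + n) s) ≤ ((N : ℝ) + 1) ^ (-s) / s := by
    rw [← (hasSum_tel hs (show (0:ℝ) < (N:ℝ) + 1 by positivity)).tsum_eq]
    apply Summable.tsum_le_tsum _ (summable_tail hs N)
      (hasSum_tel hs (show (0:ℝ) < (N:ℝ) + 1 by positivity)).summable
    intro n
    have := term_le (m := N + 1 + n) (by omega) hs
    refine this.trans (le_of_eq ?_)
    push_cast
    ring_nf
  have h2 : s * (∑' n : ℕ, term (N + 1 + n) s) ≤ s * (((N : ℝ) + 1) ^ (-s) / s) := by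
    exact mul_le_mul_of_nonneg_left h1 hs.le
  refine h2.trans (le_of_eq ?_)
  rw [rpow_neg (by positivity), one_div]
  field_simp

lemma summable_term {s : ℝ} (hs : 0 < s) : Summable (fun n : ℕ ↦ term (n + 1) s) := by
  refine (summable_tail hs 0).congr (fun n ↦ ?_)
  congr 1
  omega

lemma term_tsum_split {s : ℝ} (hs : 0 < s) (N : ℕ) :
    term_tsum s = term_sum s N + ∑' n : ℕ, term (N + 1 + n) s := by
  rw [term_tsum, termTSum, ← (summable_term hs).sum_add_tsum_nat_add N]
  congr 1
  apply tsum_congr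
  intro n
  congr 1
  omega

lemma lower_int {s X : ℝ} (hs : 0 < s) (hs1 : s ≠ 1) (hX : 1 ≤ X) :
    -(1 / X ^ s) ≤ (1 / ((⌊X⌋₊ : ℝ) + 1) ^ (s - 1) - 1 / X ^ (s - 1)) / (s - 1) := by
  set B : ℝ := (⌊X⌋₊ : ℝ) + 1 with hB
  have hXB : X ≤ B := (Nat.lt_floor_add_one X).le
  have hBX : B - X ≤ 1 := by
    have := Nat.floor_le (by linarith : (0:ℝ) ≤ X)
    simp only [hB]
    linarith
  have hX0 : (0 : ℝ) < X := by linarith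
  have hB0 : (0 : ℝ) < B := by linarith
  have h0 : (0 : ℝ) ∉ uIcc X B := notMem_uIcc_of_lt hX0 (by linarith)
  have hns : -s ≠ -1 := fun h => hs1 (neg_injective h)
  have hint : ∫ x in X..B, x ^ (-s) = (B ^ (1 - s) - X ^ (1 - s)) / (1 - s) := by
    rw [integral_rpow (Or.inr ⟨hns, h0⟩), show -s + 1 = 1 - s by ring]
  have hle : ∫ x in X..B, x ^ (-s) ≤ (B - X) * X ^ (-s) := by
    have : ∫ x in X..B, X ^ (-s) = (B - X) * X ^ (-s) := by
      rw [intervalIntegral.integral_const, smul_eq_mul]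
    rw [← this]
    apply intervalIntegral.integral_mono_on hXB
      (intervalIntegral.intervalIntegrable_rpow (Or.inr h0))
      intervalIntegrable_const
    intro x hx
    exact rpow_le_rpow_of_nonpos hX0 hx.1 (by linarith)
  have hle2 : (B - X) * X ^ (-s) ≤ X ^ (-s) :=
    mul_le_of_le_one_left (rpow_nonneg hX0.le _) hBX
  have e1 : (1 : ℝ) / X ^ s = X ^ (-s) := by rw [rpow_neg hX0.le, one_div]
  have e2 : (1 : ℝ) / B ^ (s - 1) = B ^ (1 - s) := by
    rw [show (1 - s) = -(s - 1) by ring, rpow_neg hB0.le, one_div]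
  have e3 : (1 : ℝ) / X ^ (s - 1) = X ^ (1 - s) := by
    rw [show (1 - s) = -(s - 1) by ring, rpow_neg hX0.le, one_div]
  rw [e1, e2, e3]
  have hsne : s - 1 ≠ 0 := sub_ne_zero.mpr hs1
  have hsne' : 1 - s ≠ 0 := fun h => hs1 (by linarith)
  have key : (B ^ (1 - s) - X ^ (1 - s)) / (s - 1) = -((B ^ (1 - s) - X ^ (1 - s)) / (1 - s)) := by
    field_simp
    ring
  rw [key, ← hint]
  have : ∫ x in X..B, x ^ (-s) ≤ X ^ (-s) := hle.trans hle2
  linarith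


open Complex in
noncomputable def g2 (n : ℕ) (s : ℂ) : ℂ :=
  ((n : ℂ) + 1) ^ (1 - s) - ((n : ℂ) + 2) ^ (1 - s)
    + ((n : ℂ) + 1) * (s - 1) / s * (((n : ℂ) + 2) ^ (-s) - ((n : ℂ) + 1) ^ (-s))

lemma g2_eq_integral (n : ℕ) {s : ℂ} (hs0 : s ≠ 0) (hs1 : s ≠ 1) :
    g2 n s = (s - 1) * ∫ x : ℝ in ((n : ℝ) + 1)..((n : ℝ) + 2),
      ((x : ℂ) - (((n : ℝ) + 1 : ℝ) : ℂ)) * (x : ℂ) ^ (-(s + 1)) := by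
  have ha : (0:ℝ) < (n:ℝ) + 1 := by positivity
  have h0 : (0:ℝ) ∉ uIcc ((n:ℝ)+1) ((n:ℝ)+2) := notMem_uIcc_of_lt ha (by linarith)
  have hv : ∀ x ∈ uIcc ((n:ℝ)+1) ((n:ℝ)+2), (0:ℝ) < x := by
    intro x hx
    rw [uIcc_of_le (by linarith)] at hx
    linarith [hx.1]
  have hns : -s ≠ -1 := fun h => hs1 (neg_injective h)
  have hns1 : -(s+1) ≠ -1 := fun h => hs0 (by have h2 := neg_injective h; linear_combination h2)
  have hcongr : ∀ x ∈ uIcc ((n:ℝ)+1) ((n:ℝ)+2),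
      ((x : ℂ) - (((n : ℝ) + 1 : ℝ) : ℂ)) * (x : ℂ) ^ (-(s + 1))
        = (x : ℂ) ^ (-s) - (((n:ℝ) + 1 : ℝ) : ℂ) * (x : ℂ) ^ (-(s + 1)) := by
    intro x hx
    have hx0 : (x:ℂ) ≠ 0 := by
      simpa using (hv x hx).ne'
    have hxe : (x : ℂ) ^ (-s) = (x : ℂ) ^ (-(s + 1)) * (x : ℂ) := by
      rw [show -s = -(s+1) + 1 by ring, Complex.cpow_add _ _ hx0, Complex.cpow_one]
    rw [hxe]; ring
  rw [intervalIntegral.integral_congr hcongr,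
    intervalIntegral.integral_sub (intervalIntegral.intervalIntegrable_cpow (Or.inr h0))
      ((intervalIntegral.intervalIntegrable_cpow (Or.inr h0)).const_mul _),
    intervalIntegral.integral_const_mul, integral_cpow (Or.inr ⟨hns, h0⟩),
    integral_cpow (Or.inr ⟨hns1, h0⟩),
    show -s + 1 = 1 - s by ring, show -(s+1) + 1 = -s by ring]
  have h1s : (1:ℂ) - s ≠ 0 := fun h => hs1 (by linear_combination -h)
  rw [g2]
  push_cast
  field_simp [hs0, h1s]
  ring

lemma g2_diffOn (n : ℕ) : DifferentiableOn ℂ (g2 n) {s : ℂ | 0 < s.re} := by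
  have h1 : ((n:ℂ) + 1) ≠ 0 := by
    have : ((n:ℕ) + 1 : ℂ) ≠ 0 := by exact_mod_cast Nat.succ_ne_zero n
    simpa using this
  have h2 : ((n:ℂ) + 2) ≠ 0 := by
    have : ((n:ℕ) + 2 : ℂ) ≠ 0 := by exact_mod_cast Nat.succ_ne_zero (n+1)
    simpa using this
  intro s hs
  have hs0 : s ≠ 0 := fun h => by simp [h] at hs
  apply DifferentiableAt.differentiableWithinAt
  have d1 : DifferentiableAt ℂ (fun z : ℂ => ((n:ℂ) + 1) ^ (1 - z)) s :=
    ((differentiableAt_const _).sub differentiableAt_id).const_cpow (Or.inl h1)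
  have d2 : DifferentiableAt ℂ (fun z : ℂ => ((n:ℂ) + 2) ^ (1 - z)) s :=
    ((differentiableAt_const _).sub differentiableAt_id).const_cpow (Or.inl h2)
  have d3 : DifferentiableAt ℂ (fun z : ℂ => ((n:ℂ) + 1) * (z - 1) / z) s :=
    ((differentiableAt_const _).mul (differentiableAt_id.sub (differentiableAt_const _))).div
      differentiableAt_id hs0
  have d4 : DifferentiableAt ℂ (fun z : ℂ => ((n:ℂ) + 2) ^ (-z)) s :=
    differentiableAt_id.neg.const_cpow (Or.inl h2)
  have d5 : DifferentiableAt ℂ (fun z : ℂ => ((n:ℂ) + 1) ^ (-z)) s :=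
    differentiableAt_id.neg.const_cpow (Or.inl h1)
  exact (d1.sub d2).add (d3.mul (d4.sub d5))

lemma g2_ofReal {n : ℕ} {s : ℝ} (hs : 0 < s) (hs1 : s ≠ 1) :
    g2 n (s : ℂ) = ((s : ℂ) - 1) * ((term (n + 1) s : ℝ) : ℂ) := by
  have h1 : (0:ℝ) < (n:ℝ) + 1 := by positivity
  have h2 : (0:ℝ) < (n:ℝ) + 2 := by positivity
  have hreal : (s - 1) * term (n + 1) s
      = (((n:ℝ)+1) ^ (1 - s) - ((n:ℝ)+2) ^ (1 - s))
        + ((n:ℝ)+1) * (s - 1) / s * (((n:ℝ)+2) ^ (-s) - ((n:ℝ)+1) ^ (-s)) := by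
    rw [term_of_ne n.succ_pos hs hs1]
    push_cast
    rw [show ((n:ℝ) + 1 + 1) = (n:ℝ) + 2 by ring]
    have e1 : ((n:ℝ)+1) ^ (1 - s) = 1 / ((n:ℝ)+1) ^ (s - 1) := by
      rw [show (1 - s) = -(s-1) by ring, rpow_neg h1.le, one_div]
    have e2 : ((n:ℝ)+2) ^ (1 - s) = 1 / ((n:ℝ)+2) ^ (s - 1) := by
      rw [show (1 - s) = -(s-1) by ring, rpow_neg h2.le, one_div]
    have e3 : ((n:ℝ)+1) ^ (-s) = 1 / ((n:ℝ)+1) ^ s := by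
      rw [rpow_neg h1.le, one_div]
    have e4 : ((n:ℝ)+2) ^ (-s) = 1 / ((n:ℝ)+2) ^ s := by
      rw [rpow_neg h2.le, one_div]
    rw [e1, e2, e3, e4]
    have p1 : ((n:ℝ)+1) ^ (s-1) ≠ 0 := (rpow_pos_of_pos h1 _).ne'
    have p2 : ((n:ℝ)+2) ^ (s-1) ≠ 0 := (rpow_pos_of_pos h2 _).ne'
    have p3 : ((n:ℝ)+1) ^ s ≠ 0 := (rpow_pos_of_pos h1 _).ne'
    have p4 : ((n:ℝ)+2) ^ s ≠ 0 := (rpow_pos_of_pos h2 _).ne'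
    have hsne : s - 1 ≠ 0 := sub_ne_zero.mpr hs1
    field_simp
    ring
  have hcast : ((s:ℂ) - 1) * ((term (n + 1) s : ℝ) : ℂ) = (((s - 1) * term (n + 1) s : ℝ) : ℂ) := by
    push_cast
    ring
  rw [g2, hcast, hreal]
  simp only [Complex.ofReal_add, Complex.ofReal_sub, Complex.ofReal_mul, Complex.ofReal_div,
    Complex.ofReal_one, Complex.ofReal_ofNat, Complex.ofReal_natCast, Complex.ofReal_neg,
    Complex.ofReal_cpow h1.le, Complex.ofReal_cpow h2.le]
  try ring

lemma g2_norm_le (n : ℕ) {s : ℂ} (hs : 0 < s.re) :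
    ‖g2 n s‖ ≤ ‖s - 1‖ * ((n:ℝ) + 1) ^ (-(s.re + 1)) := by
  have ha : (0:ℝ) < (n:ℝ) + 1 := by positivity
  rcases eq_or_ne s 1 with rfl | hs1
  · simp [g2]
  · have hs0 : s ≠ 0 := fun h => by simp [h] at hs
    rw [g2_eq_integral n hs0 hs1, norm_mul]
    apply mul_le_mul_of_nonneg_left ?_ (norm_nonneg _)
    have hb : ∀ x ∈ Set.uIoc ((n:ℝ)+1) ((n:ℝ)+2),
        ‖((x : ℂ) - (((n : ℝ) + 1 : ℝ) : ℂ)) * (x : ℂ) ^ (-(s + 1))‖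
          ≤ ((n:ℝ) + 1) ^ (-(s.re + 1)) := by
      intro x hx
      rw [uIoc_of_le (by linarith)] at hx
      have hx0 : (0:ℝ) < x := lt_trans ha hx.1
      rw [norm_mul]
      have e1 : ‖(x:ℂ) - (((n:ℝ)+1:ℝ):ℂ)‖ = |x - ((n:ℝ)+1)| := by
        rw [← Complex.ofReal_sub, Complex.norm_real, Real.norm_eq_abs]
      have e2 : ‖(x:ℂ) ^ (-(s+1))‖ = x ^ (-(s.re+1)) := by
        rw [Complex.norm_cpow_eq_rpow_re_of_pos hx0, Complex.neg_re,
          Complex.add_re, Complex.one_re]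
      rw [e1, e2]
      have b1 : |x - ((n:ℝ)+1)| ≤ 1 := by
        rw [abs_of_nonneg (by linarith [hx.1])]
        linarith [hx.2]
      have b2 : x ^ (-(s.re+1)) ≤ ((n:ℝ)+1) ^ (-(s.re+1)) :=
        rpow_le_rpow_of_nonpos ha hx.1.le (by linarith)
      calc |x - ((n:ℝ)+1)| * x ^ (-(s.re+1))
          ≤ 1 * (((n:ℝ)+1) ^ (-(s.re+1))) :=
            mul_le_mul b1 b2 (rpow_nonneg hx0.le _) one_pos.le
        _ = ((n:ℝ)+1) ^ (-(s.re+1)) := one_mul _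
    have := intervalIntegral.norm_integral_le_of_norm_le_const hb
    refine this.trans (le_of_eq ?_)
    rw [show ((n:ℝ)+2) - ((n:ℝ)+1) = 1 by ring, abs_one, mul_one]

noncomputable def G2 (s : ℂ) : ℂ := ∑' n : ℕ, g2 n s

lemma G2_diffOn : DifferentiableOn ℂ G2 {s : ℂ | 0 < s.re} := by
  have hVo : IsOpen {s : ℂ | 0 < s.re} := isOpen_lt continuous_const Complex.continuous_re
  apply TendstoLocallyUniformlyOn.differentiableOn
    (F := fun (K : ℕ) (s : ℂ) => ∑ n ∈ Finset.range K, g2 n s) (f := G2) (φ := atTop)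
    ?_ (Eventually.of_forall fun K => DifferentiableOn.fun_sum fun i _ => g2_diffOn i) hVo
  rw [tendstoLocallyUniformlyOn_iff_forall_isCompact hVo]
  intro K hKV hK
  rcases K.eq_empty_or_nonempty with rfl | hne
  · intro u _
    simp
  obtain ⟨s₀, hs₀K, hmin⟩ := hK.exists_isMinOn hne Complex.continuous_re.continuousOn
  obtain ⟨C, hC⟩ := hK.exists_bound_of_continuousOn
    ((continuous_id.sub continuous_const).continuousOn)
  have hδ : 0 < s₀.re := hKV hs₀K
  have hC0 : 0 ≤ C := le_trans (norm_nonneg _) (hC s₀ hs₀K)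
  apply tendstoUniformlyOn_tsum_nat (u := fun n => C * ((n:ℝ)+1) ^ (-(1+s₀.re)))
  · apply Summable.mul_left
    have h1 : Summable (fun n : ℕ => ((n:ℝ)) ^ (-(1+s₀.re))) :=
      Real.summable_nat_rpow.mpr (by linarith)
    have h2 := (summable_nat_add_iff 1).mpr h1
    refine h2.congr fun n => ?_
    push_cast
    ring_nf
  · intro n x hx
    calc ‖g2 n x‖ ≤ ‖x - 1‖ * ((n:ℝ)+1) ^ (-(x.re+1)) := g2_norm_le n (hKV hx)
      _ ≤ C * ((n:ℝ)+1) ^ (-(1+s₀.re)) := by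
          apply mul_le_mul (hC x hx) ?_ (rpow_nonneg (by positivity) _) hC0
          apply rpow_le_rpow_of_exponent_le (by linarith [Nat.cast_nonneg (α := ℝ) n])
          have hx2 : s₀.re ≤ x.re := hmin hx
          linarith

noncomputable def zetaE : ℂ → ℂ := Function.update (fun s => (s - 1) * riemannZeta s) 1 1

lemma zetaE_eq {s : ℂ} (hs : s ≠ 1) : zetaE s = (s - 1) * riemannZeta s :=
  Function.update_of_ne hs _ _

lemma zetaE_diff_ne {s : ℂ} (hs : s ≠ 1) : DifferentiableAt ℂ zetaE s := by
  have h : DifferentiableAt ℂ (fun s : ℂ => (s - 1) * riemannZeta s) s :=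
    (differentiableAt_id.sub (differentiableAt_const 1)).mul (differentiableAt_riemannZeta hs)
  apply h.congr_of_eventuallyEq
  filter_upwards [isOpen_compl_singleton.mem_nhds hs] with z hz
  exact zetaE_eq hz

lemma zetaE_diff : Differentiable ℂ zetaE := by
  intro s
  rcases eq_or_ne s 1 with rfl | hs
  · apply (Complex.analyticAt_of_differentiable_on_punctured_nhds_of_continuousAt ?_
      ?_).differentiableAt
    · filter_upwards [self_mem_nhdsWithin] with z hz
      exact zetaE_diff_ne hz
    · have h1 : Tendsto zetaE (𝓝[≠] (1:ℂ)) (𝓝 1) := by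
        apply riemannZeta_residue_one.congr'
        filter_upwards [self_mem_nhdsWithin] with z hz
        exact (zetaE_eq hz).symm
      have h2 : Tendsto zetaE (pure (1:ℂ)) (𝓝 1) := by
        rw [tendsto_pure_left]
        intro U hU
        have he : zetaE 1 = 1 := Function.update_self _ _ _
        rw [he]
        exact mem_of_mem_nhds hU
      have h3 : Tendsto zetaE (𝓝[≠] (1:ℂ) ⊔ pure 1) (𝓝 1) := by
        rw [Filter.tendsto_sup]
        exact ⟨h1, h2⟩
      rw [nhdsNE_sup_pure] at h3
      rw [ContinuousAt, show zetaE 1 = 1 from Function.update_self _ _ _]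
      exact h3
  · exact zetaE_diff_ne hs

lemma G2_real {s : ℝ} (hs : 0 < s) (hs1 : s ≠ 1) :
    G2 (s : ℂ) = ((s:ℂ) - 1) * ((term_tsum s : ℝ) : ℂ) := by
  rw [G2]
  have h : ∀ n : ℕ, g2 n (s:ℂ) = ((s:ℂ) - 1) * ((term (n+1) s : ℝ) : ℂ) :=
    fun n => g2_ofReal hs hs1
  rw [tsum_congr h, tsum_mul_left, term_tsum, termTSum, Complex.ofReal_tsum]

lemma zeta_real {s : ℝ} (hs : 1 < s) :
    riemannZeta (s : ℂ) = ((∑' n : ℕ, 1 / ((n:ℝ) + 1) ^ s : ℝ) : ℂ) := by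
  rw [zeta_eq_tsum_one_div_nat_add_one_cpow (by simpa using hs), Complex.ofReal_tsum]
  apply tsum_congr
  intro n
  have hpos : (0:ℝ) ≤ (n:ℝ) + 1 := by positivity
  rw [Complex.ofReal_div, Complex.ofReal_one, Complex.ofReal_cpow hpos s]
  norm_cast

lemma H_zero_real {σ : ℝ} (hσ : 1 < σ) :
    zetaE (σ:ℂ) - (σ:ℂ) + (σ:ℂ) * G2 (σ:ℂ) = 0 := by
  have hσ0 : (0:ℝ) < σ := by linarith
  have hσ1 : σ ≠ 1 := ne_of_gt hσ
  have hne : (σ:ℂ) ≠ 1 := by exact_mod_cast hσ1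
  rw [zetaE_eq hne, G2_real hσ0 hσ1, zeta_real hσ, term_tsum, term_tsum_of_lt hσ]
  have h1 : (σ:ℂ) ≠ 0 := by exact_mod_cast hσ0.ne'
  have h2 : (σ:ℂ) - 1 ≠ 0 := sub_ne_zero.mpr hne
  push_cast
  field_simp
  ring

lemma zeta_formula {s : ℝ} (hs : 0 < s) (hs1 : s ≠ 1) :
    (riemannZeta (s:ℂ)).re = s / (s - 1) - s * term_tsum s := by
  have hne : (s:ℂ) ≠ 1 := by exact_mod_cast hs1
  have h2 : (s:ℂ) - 1 ≠ 0 := sub_ne_zero.mpr hne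
  have h1 : (s:ℂ) ≠ 0 := by exact_mod_cast hs.ne'
  have key : zetaE (s:ℂ) - (s:ℂ) + (s:ℂ) * G2 (s:ℂ) = 0 := by
    rcases lt_or_gt_of_ne hs1 with hlt | hgt
    · have hVo : IsOpen {z : ℂ | 0 < z.re} := isOpen_lt continuous_const Complex.continuous_re
      have hVc : IsPreconnected {z : ℂ | 0 < z.re} := (convex_halfSpace_re_gt 0).isPreconnected
      have hdiff : DifferentiableOn ℂ (fun z => zetaE z - z + z * G2 z) {z : ℂ | 0 < z.re} :=
        ((zetaE_diff.differentiableOn.sub differentiableOn_id).add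
          (differentiableOn_id.mul G2_diffOn))
      have hanal : AnalyticOnNhd ℂ (fun z => zetaE z - z + z * G2 z) {z : ℂ | 0 < z.re} :=
        hdiff.analyticOnNhd hVo
      have hmem : ((3/2 : ℝ) : ℂ) ∈ {z : ℂ | 0 < z.re} := by
        simp only [mem_setOf_eq, Complex.ofReal_re]
        norm_num
      have hfreq : ∃ᶠ z in 𝓝[≠] ((3/2:ℝ):ℂ), (fun z => zetaE z - z + z * G2 z) z = 0 := by
        have hseq : Tendsto (fun k : ℕ => ((3/2 + 1/((k:ℝ)+1) : ℝ) : ℂ)) atTop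
            (𝓝[≠] ((3/2:ℝ):ℂ)) := by
          apply tendsto_nhdsWithin_of_tendsto_nhds_of_eventually_within
          · have hr : Tendsto (fun k : ℕ => (3/2 + 1/((k:ℝ)+1) : ℝ)) atTop (𝓝 (3/2)) := by
              have h0 := tendsto_one_div_add_atTop_nhds_zero_nat (𝕜 := ℝ)
              simpa using tendsto_const_nhds.add h0
            exact (Complex.continuous_ofReal.tendsto _).comp hr
          · apply Eventually.of_forall
            intro k
            simp only [mem_compl_iff, mem_singleton_iff]
            intro h
            have h' : (3/2 + 1/((k:ℝ)+1) : ℝ) = 3/2 := by exact_mod_cast h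
            have hk : 0 < 1/((k:ℝ)+1) := by positivity
            linarith
        apply hseq.frequently
        apply Filter.Eventually.frequently
        apply Eventually.of_forall
        intro k
        have hk : 0 < 1/((k:ℝ)+1) := by positivity
        exact H_zero_real (by linarith)
      have hall := hanal.eqOn_zero_of_preconnected_of_frequently_eq_zero hVc hmem hfreq
      have hsV : (s:ℂ) ∈ {z : ℂ | 0 < z.re} := by
        simp only [mem_setOf_eq, Complex.ofReal_re]
        exact hs
      exact hall hsV
    · exact H_zero_real hgt
  rw [zetaE_eq hne, G2_real hs hs1] at key
  have hz : riemannZeta (s:ℂ) = ((s / (s - 1) - s * term_tsum s : ℝ) : ℂ) := by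
    apply mul_left_cancel₀ h2
    push_cast
    field_simp
    linear_combination key
  rw [hz, Complex.ofReal_re]

end EMaux

theorem stmt_1 (α X : ℝ) (hα : 0 < α) (hα1 : α ≠ 1) (hX : 1 ≤ X) :
    (riemannZeta α).re - 1 / ((α - 1) * X ^ (α - 1))
      - (∑ n ∈ Finset.Icc 1 ⌊X⌋₊, (1 : ℝ) / (n : ℝ) ^ α) ≥ -(1 / X ^ α) := by
  have hX0 : (0:ℝ) < X := by linarith
  set N := ⌊X⌋₊ with hN
  have hζ := EMaux.zeta_formula hα hα1
  have hsplit := EMaux.term_tsum_split hα N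
  have hTS := EMaux.term_sum_of_ne N hα hα1
  have htail := EMaux.tail_le hα N
  have htail0 : 0 ≤ ∑' n : ℕ, ZetaAsymptotics.term (N + 1 + n) α :=
    tsum_nonneg fun n => ZetaAsymptotics.term_nonneg _ _
  have hint := EMaux.lower_int hα hα1 hX
  have hS : (∑ n ∈ Finset.Icc 1 N, (1:ℝ) / (n:ℝ) ^ α)
      = ∑ n ∈ Finset.range N, 1 / ((n:ℝ) + 1) ^ α := by
    rw [← Finset.Ico_add_one_right_eq_Icc, Finset.sum_Ico_eq_sum_range]
    simp only [Nat.add_sub_cancel_right, Nat.succ_sub_one]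
    apply Finset.sum_congr rfl
    intro n _
    push_cast
    ring_nf
  have hb0 : (0:ℝ) < (N:ℝ) + 1 := by positivity
  have hP : ((N:ℝ) + 1) ^ α = ((N:ℝ) + 1) ^ (α - 1) * ((N:ℝ) + 1) := by
    conv_lhs => rw [show α = (α - 1) + 1 by ring]
    rw [Real.rpow_add_one hb0.ne']
  have hP1 : (0:ℝ) < ((N:ℝ) + 1) ^ (α - 1) := Real.rpow_pos_of_pos hb0 _
  have hQ1 : (0:ℝ) < X ^ (α - 1) := Real.rpow_pos_of_pos hX0 _
  have hQ2 : (0:ℝ) < X ^ α := Real.rpow_pos_of_pos hX0 _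
  have hα1' : α - 1 ≠ 0 := sub_ne_zero.mpr hα1
  rw [ge_iff_le, hζ, hsplit, hTS, hS]
  set t := ∑' n : ℕ, ZetaAsymptotics.term (N + 1 + n) α with ht
  set S := ∑ n ∈ Finset.range N, 1 / ((n:ℝ)+1) ^ α with hSS
  have key : α / (α - 1) - α * ((1 / (α - 1) * (1 - 1 / ((N:ℝ) + 1) ^ (α - 1))
        - 1 / α * (S - (N:ℝ) / ((N:ℝ) + 1) ^ α)) + t) - 1 / ((α - 1) * X ^ (α - 1)) - S
      = (1 / ((N:ℝ) + 1) ^ (α - 1) - 1 / X ^ (α - 1)) / (α - 1)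
        + (1 / ((N:ℝ) + 1) ^ α - α * t) := by
    rw [hP]
    field_simp
    ring
  linarith [key, hint, htail]
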